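/- Let φ be a state on ℓ∞(κ) such that the supremum, over all finite subsets I ⊆ κ, of the real part of ν_φ(I) equals 1. Then φ is completely additive: for every index type ι and every family (A_α)_{α∈ι} of pairwise disjoint subsets of κ, ν_φ(⋃_α A_α) = ∑'_α ν_φ(A_α). -/

import Mathlib

open scoped ENNReal
open Filter

universe u

/-- The indicator function of `I` as an element of `ℓ∞(κ)`. -/
noncomputable def chi {κ : Type*} (I : Set κ) : lp (fun _ : κ => ℂ) ∞ :=
  ⟨I.indicator (fun _ => (1 : ℂ)), memℓp_infty ⟨1, by
    rintro x ⟨i, rfl⟩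
    by_cases h : i ∈ I <;> simp [Set.indicator, h]⟩⟩

/-- A state on `ℓ∞(κ)`: a continuous linear functional with `φ 1 = 1` that takes
nonnegative real values on functions with nonnegative real values. -/
structure IsState {κ : Type*} (φ : lp (fun _ : κ => ℂ) ∞ →L[ℂ] ℂ) : Prop where
  map_one : φ 1 = 1
  nonneg : ∀ f : lp (fun _ : κ => ℂ) ∞,
    (∀ i, ∃ r : ℝ, 0 ≤ r ∧ f i = r) → ∃ r : ℝ, 0 ≤ r ∧ φ f = r

namespace StateAux

variable {κ : Type u} (φ : lp (fun _ : κ => ℂ) ∞ →L[ℂ] ℂ)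

lemma chi_coe (I : Set κ) : ⇑(chi I) = I.indicator (fun _ => (1 : ℂ)) := rfl

lemma chi_union {I J : Set κ} (h : Disjoint I J) : chi (I ∪ J) = chi I + chi J := by
  apply lp.ext
  rw [lp.coeFn_add, chi_coe, chi_coe, chi_coe]
  exact Set.indicator_union_of_disjoint h _

lemma chi_empty : chi (∅ : Set κ) = 0 := by
  apply lp.ext
  rw [lp.coeFn_zero, chi_coe]
  funext i; simp

lemma chi_univ : chi (Set.univ : Set κ) = 1 := by
  apply lp.ext
  rw [lp.infty_coeFn_one, chi_coe]
  funext i; simp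

lemma nu_nonneg (hφ : IsState φ) (I : Set κ) : 0 ≤ (φ (chi I)).re := by
  obtain ⟨r, hr0, hr⟩ := hφ.nonneg (chi I) (fun i => by
    by_cases h : i ∈ I
    · exact ⟨1, zero_le_one, by simp [chi_coe, Set.indicator, h]⟩
    · exact ⟨0, le_rfl, by simp [chi_coe, Set.indicator, h]⟩)
  rw [hr]; simpa using hr0

lemma nu_real (hφ : IsState φ) (I : Set κ) : φ (chi I) = ((φ (chi I)).re : ℂ) := by
  obtain ⟨r, hr0, hr⟩ := hφ.nonneg (chi I) (fun i => by
    by_cases h : i ∈ I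
    · exact ⟨1, zero_le_one, by simp [chi_coe, Set.indicator, h]⟩
    · exact ⟨0, le_rfl, by simp [chi_coe, Set.indicator, h]⟩)
  rw [hr]; simp

lemma nu_add {I J : Set κ} (h : Disjoint I J) :
    (φ (chi (I ∪ J))).re = (φ (chi I)).re + (φ (chi J)).re := by
  rw [chi_union h, map_add, Complex.add_re]

lemma nu_mono (hφ : IsState φ) {I J : Set κ} (h : I ⊆ J) :
    (φ (chi I)).re ≤ (φ (chi J)).re := by
  have hd : Disjoint I (J \ I) := Set.disjoint_sdiff_right
  have h1 := nu_add φ hd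
  rw [Set.union_diff_cancel h] at h1
  have h2 := nu_nonneg φ hφ (J \ I)
  linarith

end StateAux

open StateAux in
theorem stmt_6 {κ : Type u} [Infinite κ] (φ : lp (fun _ : κ => ℂ) ∞ →L[ℂ] ℂ)
    (hφ : IsState φ)
    (hsup : (⨆ I : {I : Set κ // I.Finite}, (φ (chi I.1)).re) = 1) :
    ∀ (ι : Type u) (A : ι → Set κ), Pairwise (Function.onFun Disjoint A) →
      φ (chi (⋃ α, A α)) = ∑' α, φ (chi (A α)) := by
  classical
  intro ι A hA
  rcases isEmpty_or_nonempty ι with hι | hι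
  · rw [Set.iUnion_of_empty, chi_empty, map_zero, tsum_empty]
  set f : ι → ℝ := fun α => (φ (chi (A α))).re with hfdef
  have hfnn : ∀ α, 0 ≤ f α := fun α => nu_nonneg φ hφ _
  -- finite additivity
  have hbi : ∀ S : Finset ι, φ (chi (⋃ α ∈ S, A α)) = ∑ α ∈ S, φ (chi (A α)) := by
    intro S
    induction S using Finset.induction_on with
    | empty => simp [chi_empty]
    | insert a S ha ih =>
      have hd : Disjoint (A a) (⋃ α ∈ S, A α) := by
        simp only [Set.disjoint_iUnion_right]
        intro α hα
        exact hA (fun h => ha (h ▸ hα))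
      rw [Finset.set_biUnion_insert, chi_union hd, map_add, ih, Finset.sum_insert ha]
  have hbiR : ∀ S : Finset ι, (φ (chi (⋃ α ∈ S, A α))).re = ∑ α ∈ S, f α := by
    intro S
    rw [hbi S, Complex.re_sum]
  have hnu_univ : (φ (chi (Set.univ : Set κ))).re = 1 := by
    rw [chi_univ, hφ.map_one]; simp
  have hub : ∀ S : Finset ι, ∑ α ∈ S, f α ≤ 1 := by
    intro S
    rw [← hbiR S, ← hnu_univ]
    exact nu_mono φ hφ (Set.subset_univ _)
  have hsum : Summable f := summable_of_sum_le (fun α => hfnn α) hub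
  set U : Set κ := ⋃ α, A α with hUdef
  -- main real equality
  have key : (φ (chi U)).re = ∑' α, f α := by
    refine le_antisymm ?_ ?_
    · refine le_of_forall_pos_le_add fun ε hε => ?_
      obtain ⟨I, hI⟩ := exists_lt_of_lt_ciSup
        (show (1 : ℝ) - ε < ⨆ I : {I : Set κ // I.Finite}, (φ (chi I.1)).re by
          rw [hsup]; linarith)
      -- complement is small
      have h1 : (φ (chi (Set.univ : Set κ))).re
          = (φ (chi I.1)).re + (φ (chi (Set.univ \ I.1))).re := by
        rw [← nu_add φ (Set.disjoint_sdiff_right), Set.union_diff_cancel (Set.subset_univ _)]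
      have hcomp : (φ (chi (Set.univ \ I.1))).re < ε := by
        rw [hnu_univ] at h1; linarith
      -- finitely many α meet I
      have hUIfin : (U ∩ I.1).Finite := I.2.subset Set.inter_subset_right
      set g : κ → ι := fun x => if h : ∃ α, x ∈ A α then h.choose else Classical.arbitrary ι
        with hgdef
      have hg : ∀ x, (h : ∃ α, x ∈ A α) → x ∈ A (g x) := by
        intro x h
        simp only [hgdef, dif_pos h]
        exact h.choose_spec
      set S : Finset ι := hUIfin.toFinset.image g with hSdef
      have hcov : U ∩ I.1 ⊆ ⋃ α ∈ S, A α := by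
        intro x hx
        have hex : ∃ α, x ∈ A α := Set.mem_iUnion.mp hx.1
        exact Set.mem_biUnion (Finset.mem_image_of_mem g (hUIfin.mem_toFinset.mpr hx))
          (hg x hex)
      have h2 : (φ (chi (U ∩ I.1))).re ≤ ∑' α, f α := by
        calc (φ (chi (U ∩ I.1))).re ≤ (φ (chi (⋃ α ∈ S, A α))).re := nu_mono φ hφ hcov
          _ = ∑ α ∈ S, f α := hbiR S
          _ ≤ ∑' α, f α := Summable.sum_le_tsum S (fun α _ => hfnn α) hsum
      have hsplit : (φ (chi U)).re
          = (φ (chi (U ∩ I.1))).re + (φ (chi (U \ I.1))).re := by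
        rw [← nu_add φ (Set.disjoint_sdiff_right.mono_left Set.inter_subset_right),
          Set.inter_union_diff]
      have h3 : (φ (chi (U \ I.1))).re ≤ (φ (chi (Set.univ \ I.1))).re :=
        nu_mono φ hφ (Set.diff_subset_diff_left (Set.subset_univ _))
      linarith
    · refine Summable.tsum_le_of_sum_le hsum fun S => ?_
      rw [← hbiR S]
      exact nu_mono φ hφ (Set.iUnion₂_subset fun α _ => Set.subset_iUnion A α)
  calc φ (chi U) = ((φ (chi U)).re : ℂ) := nu_real φ hφ U
    _ = ((∑' α, f α : ℝ) : ℂ) := by rw [key]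
    _ = ∑' α, ((f α : ℝ) : ℂ) := Complex.ofReal_tsum f
    _ = ∑' α, φ (chi (A α)) := tsum_congr fun α => (nu_real φ hφ (A α)).symm
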